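/- Let K ≥ 0 be an integer, let Φ_0, Φ_1, …, Φ_K be real numbers, and let 0 < ε ≤ π. Assume the consecutive differences are non-increasing and pinched between ε and 2π − ε, i.e. ε ≤ Φ_K − Φ_{K−1} ≤ Φ_{K−1} − Φ_{K−2} ≤ … ≤ Φ_1 − Φ_0 ≤ 2π − ε. Then |∑_{k=0}^K e^{iΦ_k}| ≤ cot(ε/4). -/

import Mathlib

open Real Finset

/-- cotangent is antitone on `(0, π)`. -/
lemma my_cot_le_cot {a s : ℝ} (ha : 0 < a) (has : a ≤ s) (hs : s < π) :
    Real.cot s ≤ Real.cot a := by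
  have hsa : Real.sin a > 0 := Real.sin_pos_of_pos_of_lt_pi ha (lt_of_le_of_lt has hs)
  have hss : Real.sin s > 0 := Real.sin_pos_of_pos_of_lt_pi (lt_of_lt_of_le ha has) hs
  rw [Real.cot_eq_cos_div_sin, Real.cot_eq_cos_div_sin, div_le_div_iff₀ hss hsa]
  have h1 : Real.sin (s - a) ≥ 0 := by
    apply Real.sin_nonneg_of_nonneg_of_le_pi <;> [linarith; linarith]
  rw [Real.sin_sub] at h1
  nlinarith

/-- sine lower bound on `[a, π - a]`. -/
lemma my_sin_ge {a s : ℝ} (ha : 0 < a) (has : a ≤ s) (hs : s ≤ π - a) :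
    Real.sin a ≤ Real.sin s := by
  rcases le_or_gt s (π/2) with h | h
  · exact Real.sin_le_sin_of_le_of_le_pi_div_two (by linarith) h has
  · have : Real.sin s = Real.sin (π - s) := (Real.sin_pi_sub s).symm
    rw [this]
    exact Real.sin_le_sin_of_le_of_le_pi_div_two (by linarith) (by linarith) (by linarith)

/-- half angle identity for cotangent. -/
lemma my_half (ε : ℝ) (hε : 0 < ε) (hεπ : ε ≤ π) :
    Real.cot (ε/2) + 1 / Real.sin (ε/2) = Real.cot (ε/4) := by
  have h2 : (0:ℝ) < ε/2 := by linarith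
  have h4 : (0:ℝ) < ε/4 := by linarith
  have hs2 : Real.sin (ε/2) > 0 := Real.sin_pos_of_pos_of_lt_pi h2 (by linarith [Real.pi_pos])
  have hs4 : Real.sin (ε/4) > 0 := Real.sin_pos_of_pos_of_lt_pi h4 (by linarith [Real.pi_pos])
  have hc4 : Real.cos (ε/4) > 0 := by
    apply Real.cos_pos_of_mem_Ioo
    constructor <;> [linarith [Real.pi_pos]; linarith [Real.pi_pos]]
  have hd : ε/2 = 2 * (ε/4) := by ring
  rw [Real.cot_eq_cos_div_sin, Real.cot_eq_cos_div_sin, hd, Real.cos_two_mul, Real.sin_two_mul]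
  have hpy := Real.sin_sq_add_cos_sq (ε/4)
  field_simp
  nlinarith [hpy]

/-- the key complex identity `(1 - e^{2is}) (1/2 + (cot s)/2 · i) = 1`. -/
lemma my_key (s : ℝ) (hs : Real.sin s ≠ 0) :
    (1 - Complex.exp (Complex.I * ((2*s : ℝ) : ℂ))) *
      ((1/2 : ℂ) + ((Real.cos s / Real.sin s / 2 : ℝ) : ℂ) * Complex.I) = 1 := by
  rw [mul_comm Complex.I, Complex.exp_mul_I, ← Complex.ofReal_cos, ← Complex.ofReal_sin]
  have hcos : Real.cos (2*s) = 1 - 2 * Real.sin s ^ 2 := by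
    rw [Real.cos_two_mul']; nlinarith [Real.sin_sq_add_cos_sq s]
  have hsin : Real.sin (2*s) = 2 * Real.sin s * Real.cos s := Real.sin_two_mul s
  rw [hcos, hsin]
  have hpy := Real.sin_sq_add_cos_sq s
  simp only [Complex.ext_iff, Complex.mul_re, Complex.mul_im, Complex.add_re, Complex.add_im,
    Complex.sub_re, Complex.sub_im, Complex.one_re, Complex.one_im, Complex.ofReal_re,
    Complex.ofReal_im, Complex.I_re, Complex.I_im]
  norm_num
  constructor <;> field_simp
  · linear_combination hpy
  · nlinarith [hpy, sq_nonneg (Real.sin s), sq_nonneg (Real.cos s)]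

/-- one step of the summation by parts. -/
lemma my_step (x y : ℝ) (hs : Real.sin ((y - x)/2) ≠ 0) :
    Complex.exp (Complex.I * (x:ℂ)) =
      (Complex.exp (Complex.I * (x:ℂ)) - Complex.exp (Complex.I * (y:ℂ))) *
        ((1/2 : ℂ) + ((Real.cos ((y - x)/2) / Real.sin ((y - x)/2) / 2 : ℝ) : ℂ) * Complex.I) := by
  have hkey := my_key ((y - x)/2) hs
  have h2s : (2 * ((y - x)/2) : ℝ) = y - x := by ring
  rw [h2s] at hkey
  have hy : Complex.exp (Complex.I * (y:ℂ)) =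
      Complex.exp (Complex.I * (x:ℂ)) * Complex.exp (Complex.I * ((y - x : ℝ) : ℂ)) := by
    rw [← Complex.exp_add]; push_cast; ring_nf
  rw [hy]
  calc Complex.exp (Complex.I * (x:ℂ))
      = Complex.exp (Complex.I * (x:ℂ)) * ((1 - Complex.exp (Complex.I * ((y - x : ℝ) : ℂ))) *
        ((1/2 : ℂ) + ((Real.cos ((y - x)/2) / Real.sin ((y - x)/2) / 2 : ℝ) : ℂ) * Complex.I)) := by
        rw [hkey, mul_one]
    _ = _ := by ring

/-- Abel summation identity. -/
lemma my_abel (f g : ℕ → ℂ) : ∀ K : ℕ, 1 ≤ K →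
    ∑ k ∈ range K, (f k - f (k+1)) * g (k+1) + f K =
      f 0 * g 1 + f K * (1 - g K) + ∑ k ∈ Ico 1 K, f k * (g (k+1) - g k) := by
  intro K
  induction K with
  | zero => omega
  | succ n ih =>
    intro _
    rcases Nat.eq_or_lt_of_le (show 1 ≤ n + 1 from by omega) with h | h
    · simp [← h]; ring
    · have hn : 1 ≤ n := by omega
      rw [Finset.sum_range_succ, Finset.sum_Ico_succ_top hn]
      have := ih hn
      ring_nf
      ring_nf at this
      linear_combination this

/-- The Kuzmin–Landau inequality for exponential sums. -/
theorem stmt_3 (K : ℕ) (Φ : ℕ → ℝ) (ε : ℝ) (hε : 0 < ε) (hεπ : ε ≤ π)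
    (hlb : 1 ≤ K → ε ≤ Φ K - Φ (K - 1))
    (hmono : ∀ k : ℕ, 1 ≤ k → k + 1 ≤ K → Φ (k + 1) - Φ k ≤ Φ k - Φ (k - 1))
    (hub : 1 ≤ K → Φ 1 - Φ 0 ≤ 2 * π - ε) :
    ‖∑ k ∈ Finset.range (K + 1), Complex.exp (Complex.I * (Φ k : ℂ))‖ ≤ Real.cot (ε / 4) := by
  have hpi := Real.pi_pos
  have hcot1 : 1 ≤ Real.cot (ε/4) := by
    have h := my_cot_le_cot (a := ε/4) (s := π/4) (by linarith) (by linarith) (by linarith)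
    rwa [show Real.cot (π/4) = 1 by
      rw [Real.cot_eq_cos_div_sin, Real.cos_pi_div_four, Real.sin_pi_div_four]; norm_num] at h
  rcases Nat.eq_zero_or_pos K with hK0 | hK1
  · subst hK0
    rw [show (0:ℕ)+1 = 1 from rfl, Finset.range_one, Finset.sum_singleton,
      Complex.norm_exp]
    simpa using hcot1
  -- main case
  -- monotone chain of differences
  have hchain : ∀ j, ∀ i, 1 ≤ i → i ≤ j → j ≤ K → Φ j - Φ (j-1) ≤ Φ i - Φ (i-1) := by
    intro j
    induction j with
    | zero => intro i h1 h2 _; omega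
    | succ n ih =>
      intro i h1 h2 h3
      rcases Nat.eq_or_lt_of_le h2 with h | h
      · rw [h]
      · have hn : 1 ≤ n := by omega
        have step : Φ (n+1) - Φ n ≤ Φ n - Φ (n-1) := hmono n hn h3
        have hrec : Φ n - Φ (n-1) ≤ Φ i - Φ (i-1) := ih i h1 (by omega) (by omega)
        have : (n+1) - 1 = n := rfl
        rw [this]
        linarith
  have hθlb : ∀ j, 1 ≤ j → j ≤ K → ε ≤ Φ j - Φ (j-1) :=
    fun j h1 h2 => le_trans (hlb hK1) (hchain K j h1 h2 le_rfl)
  have hθub : ∀ j, 1 ≤ j → j ≤ K → Φ j - Φ (j-1) ≤ 2*π - ε := by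
    intro j h1 h2
    have := hchain j 1 le_rfl h1 h2
    simpa using le_trans this (hub hK1)
  have hsmem : ∀ j, 1 ≤ j → j ≤ K →
      ε/2 ≤ (Φ j - Φ (j-1))/2 ∧ (Φ j - Φ (j-1))/2 ≤ π - ε/2 := by
    intro j h1 h2
    constructor
    · linarith [hθlb j h1 h2]
    · linarith [hθub j h1 h2]
  have hsin : ∀ j, 1 ≤ j → j ≤ K → 0 < Real.sin ((Φ j - Φ (j-1))/2) := by
    intro j h1 h2
    obtain ⟨hl, hr⟩ := hsmem j h1 h2
    exact Real.sin_pos_of_pos_of_lt_pi (by linarith) (by linarith)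
  set t : ℕ → ℝ := fun j =>
    Real.cos ((Φ j - Φ (j-1))/2) / Real.sin ((Φ j - Φ (j-1))/2) / 2 with ht
  set w : ℕ → ℂ := fun j => (1/2 : ℂ) + ((t j : ℝ) : ℂ) * Complex.I with hw
  set u : ℕ → ℂ := fun k => Complex.exp (Complex.I * ((Φ k : ℝ) : ℂ)) with hu
  -- rewrite the sum
  have hsum : ∑ k ∈ Finset.range (K+1), u k
      = ∑ k ∈ range K, (u k - u (k+1)) * w (k+1) + u K := by
    rw [Finset.sum_range_succ]
    congr 1
    apply Finset.sum_congr rfl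
    intro k hk
    have hk2 : k + 1 ≤ K := Finset.mem_range.mp hk
    have hne : Real.sin ((Φ (k+1) - Φ k)/2) ≠ 0 := by
      have := hsin (k+1) (by omega) hk2
      simpa using ne_of_gt this
    have hstep := my_step (Φ k) (Φ (k+1)) hne
    have hwk : w (k+1) = (1/2 : ℂ) +
        ((Real.cos ((Φ (k+1) - Φ k)/2) / Real.sin ((Φ (k+1) - Φ k)/2) / 2 : ℝ) : ℂ) * Complex.I := by
      simp only [hw, ht]
      norm_num
    rw [hwk]
    exact hstep
  rw [hsum, my_abel u w K hK1]
  -- norms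
  have hu1 : ∀ k, ‖u k‖ = 1 := by
    intro k
    rw [hu]
    simp only []
    rw [Complex.norm_exp]
    simp
  have hwnorm : ∀ j, 1 ≤ j → j ≤ K → ‖w j‖ = 1 / (2 * Real.sin ((Φ j - Φ (j-1))/2)) := by
    intro j h1 h2
    have hsj := hsin j h1 h2
    rw [hw]
    simp only []
    rw [show (1/2 : ℂ) = ((1/2 : ℝ) : ℂ) by norm_num,
      Complex.norm_add_mul_I]
    rw [show (1/2:ℝ)^2 + (t j)^2 = (1/(2 * Real.sin ((Φ j - Φ (j-1))/2)))^2 by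
      rw [ht]
      field_simp
      nlinarith [Real.sin_sq_add_cos_sq ((Φ j - Φ (j-1))/2)]]
    exact Real.sqrt_sq (by positivity)
  have hwKnorm : ‖1 - w K‖ = 1 / (2 * Real.sin ((Φ K - Φ (K-1))/2)) := by
    have hsj := hsin K hK1 le_rfl
    have : (1 : ℂ) - w K = ((1/2 : ℝ) : ℂ) + ((-(t K) : ℝ) : ℂ) * Complex.I := by
      rw [hw]; push_cast; ring
    rw [this, Complex.norm_add_mul_I]
    rw [show (1/2:ℝ)^2 + (-(t K))^2 = (1/(2 * Real.sin ((Φ K - Φ (K-1))/2)))^2 by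
      rw [ht]
      field_simp
      nlinarith [Real.sin_sq_add_cos_sq ((Φ K - Φ (K-1))/2)]]
    exact Real.sqrt_sq (by positivity)
  -- monotonicity of t
  have htmono : ∀ k, 1 ≤ k → k + 1 ≤ K → t k ≤ t (k+1) := by
    intro k h1 h2
    have hm : Φ (k+1) - Φ k ≤ Φ k - Φ (k-1) := hmono k h1 h2
    have hs1 := hsmem k h1 (by omega)
    have hs2 := hsmem (k+1) (by omega) h2
    have hred : ((k:ℕ)+1) - 1 = k := rfl
    have hc : Real.cot ((Φ k - Φ (k-1))/2) ≤ Real.cot ((Φ (k+1) - Φ ((k+1)-1))/2) := by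
      rw [hred]
      apply my_cot_le_cot (a := (Φ (k+1) - Φ k)/2)
      · have := hs2.1; rw [hred] at this; linarith
      · linarith
      · linarith [hs1.2]
    rw [Real.cot_eq_cos_div_sin, Real.cot_eq_cos_div_sin] at hc
    rw [ht]
    simp only []
    linarith
  have hwdnorm : ∀ k, 1 ≤ k → k + 1 ≤ K → ‖w (k+1) - w k‖ = t (k+1) - t k := by
    intro k h1 h2
    have : w (k+1) - w k = (((t (k+1) - t k : ℝ)) : ℂ) * Complex.I := by
      rw [hw]; push_cast; ring
    rw [this, norm_mul, Complex.norm_I, mul_one, Complex.norm_real, Real.norm_eq_abs,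
      abs_of_nonneg (by linarith [htmono k h1 h2])]
  -- triangle inequality
  have htri : ‖u 0 * w 1 + u K * (1 - w K) + ∑ k ∈ Ico 1 K, u k * (w (k+1) - w k)‖
      ≤ ‖w 1‖ + ‖1 - w K‖ + ∑ k ∈ Ico 1 K, (t (k+1) - t k) := by
    calc ‖u 0 * w 1 + u K * (1 - w K) + ∑ k ∈ Ico 1 K, u k * (w (k+1) - w k)‖
        ≤ ‖u 0 * w 1 + u K * (1 - w K)‖ + ‖∑ k ∈ Ico 1 K, u k * (w (k+1) - w k)‖ :=
          norm_add_le _ _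
      _ ≤ (‖u 0 * w 1‖ + ‖u K * (1 - w K)‖) + ∑ k ∈ Ico 1 K, ‖u k * (w (k+1) - w k)‖ :=
          add_le_add (norm_add_le _ _) (norm_sum_le _ _)
      _ = (‖w 1‖ + ‖1 - w K‖) + ∑ k ∈ Ico 1 K, ‖w (k+1) - w k‖ := by
          rw [norm_mul, norm_mul, hu1 0, hu1 K, one_mul, one_mul]
          congr 1
          apply Finset.sum_congr rfl
          intro k hk
          rw [norm_mul, hu1 k, one_mul]
      _ ≤ ‖w 1‖ + ‖1 - w K‖ + ∑ k ∈ Ico 1 K, (t (k+1) - t k) := by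
          apply add_le_add_right
          apply Finset.sum_le_sum
          intro k hk
          obtain ⟨hk1, hk2⟩ := Finset.mem_Ico.mp hk
          rw [hwdnorm k hk1 (by omega)]
  -- telescoping
  have htel : ∑ k ∈ Ico 1 K, (t (k+1) - t k) = t K - t 1 := by
    rw [Finset.sum_Ico_eq_sum_range]
    have h1 : ∑ i ∈ range (K - 1), (t (1 + i + 1) - t (1 + i)) = t (1 + (K-1)) - t (1 + 0) :=
      Finset.sum_range_sub (fun i => t (1 + i)) (K - 1)
    rw [show (1 + (K-1) : ℕ) = K by omega] at h1
    simpa using h1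
  rw [htel] at htri
  -- final bounds
  have hs2pos : 0 < Real.sin (ε/2) :=
    Real.sin_pos_of_pos_of_lt_pi (by linarith) (by linarith)
  have hbound : ∀ j, 1 ≤ j → j ≤ K →
      1 / (2 * Real.sin ((Φ j - Φ (j-1))/2)) ≤ 1 / (2 * Real.sin (ε/2)) := by
    intro j h1 h2
    obtain ⟨hl, hr⟩ := hsmem j h1 h2
    have := my_sin_ge (a := ε/2) (s := (Φ j - Φ (j-1))/2) (by linarith) hl hr
    apply one_div_le_one_div_of_le (by positivity)
    linarith
  -- bounds on t K and t 1
  have hcotK : Real.cot ((Φ K - Φ (K-1))/2) ≤ Real.cot (ε/2) := by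
    obtain ⟨hl, hr⟩ := hsmem K hK1 le_rfl
    exact my_cot_le_cot (by linarith) hl (by linarith)
  have hcot1' : - Real.cot (ε/2) ≤ Real.cot ((Φ 1 - Φ 0)/2) := by
    obtain ⟨hl, hr⟩ := hsmem 1 le_rfl hK1
    have h := my_cot_le_cot (a := (Φ 1 - Φ (1-1))/2) (s := π - ε/2) (by simpa using by linarith) (by simpa using hr) (by linarith)
    have hval : Real.cot (π - ε/2) = - Real.cot (ε/2) := by
      rw [Real.cot_eq_cos_div_sin, Real.cot_eq_cos_div_sin, Real.cos_pi_sub, Real.sin_pi_sub]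
      ring
    rw [hval] at h
    simpa using h
  have htK : t K ≤ Real.cot (ε/2) / 2 := by
    rw [ht]
    simp only []
    rw [← Real.cot_eq_cos_div_sin]
    linarith
  have ht1 : - (Real.cot (ε/2) / 2) ≤ t 1 := by
    rw [ht]
    simp only []
    rw [← Real.cot_eq_cos_div_sin]
    have : (1 : ℕ) - 1 = 0 := rfl
    rw [this]
    linarith
  have hw1 := hwnorm 1 le_rfl hK1
  have hwK := hwnorm K hK1 le_rfl
  have hb1 := hbound 1 le_rfl hK1
  have hbK := hbound K hK1 le_rfl
  have hhalf := my_half ε hε hεπ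
  calc ‖u 0 * w 1 + u K * (1 - w K) + ∑ k ∈ Ico 1 K, u k * (w (k+1) - w k)‖
      ≤ ‖w 1‖ + ‖1 - w K‖ + (t K - t 1) := htri
    _ ≤ 1 / (2 * Real.sin (ε/2)) + 1 / (2 * Real.sin (ε/2))
        + (Real.cot (ε/2) / 2 + Real.cot (ε/2) / 2) := by
        rw [hw1, hwKnorm]
        have : ‖w K‖ = 1 / (2 * Real.sin ((Φ K - Φ (K-1))/2)) := hwK
        linarith
    _ = Real.cot (ε/2) + 1 / Real.sin (ε/2) := by
        field_simp
        ring
    _ = Real.cot (ε/4) := hhalf
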